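/- Let X be a (G,H)-equivalence, E = G⋉X⋊H, and μ a Radon measure on X quasi-invariant with respect to E. Then the push-forward measure τ = (s_X)_*μ on H⁽⁰⁾ is quasi-invariant with respect to H. -/

import Mathlib

open MeasureTheory Filter Topology

/-- Algebraic data of a groupoid: arrows, objects (units), range, source,
unit inclusion, (total extensions of) composition and inversion. -/
structure GroupoidData (Arr : Type) (Obj : Type) where
  r : Arr → Obj
  s : Arr → Obj
  unit : Obj → Arr
  comp : Arr → Arr → Arr
  inv : Arr → Arr

/-- The axioms making `GroupoidData` an honest groupoid (composition is only
required to behave on composable pairs). -/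
structure GroupoidData.IsGroupoid {Arr Obj : Type} (D : GroupoidData Arr Obj) : Prop where
  r_unit : ∀ u, D.r (D.unit u) = u
  s_unit : ∀ u, D.s (D.unit u) = u
  r_comp : ∀ a b, D.s a = D.r b → D.r (D.comp a b) = D.r a
  s_comp : ∀ a b, D.s a = D.r b → D.s (D.comp a b) = D.s b
  comp_assoc : ∀ a b c, D.s a = D.r b → D.s b = D.r c →
    D.comp (D.comp a b) c = D.comp a (D.comp b c)
  unit_comp : ∀ a, D.comp (D.unit (D.r a)) a = a
  comp_unit : ∀ a, D.comp a (D.unit (D.s a)) = a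
  r_inv : ∀ a, D.r (D.inv a) = D.s a
  s_inv : ∀ a, D.s (D.inv a) = D.r a
  inv_comp : ∀ a, D.comp (D.inv a) a = D.unit (D.s a)
  comp_inv : ∀ a, D.comp a (D.inv a) = D.unit (D.r a)

/-- A left action of the groupoid `G` on a set `X` with moment map `rX`;
`lact γ x` is only meaningful when `G.s γ = rX x`. -/
structure IsLeftActionOf {ArrG ObjG X : Type} (G : GroupoidData ArrG ObjG)
    (rX : X → ObjG) (lact : ArrG → X → X) : Prop where
  moment : ∀ γ x, G.s γ = rX x → rX (lact γ x) = G.r γ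
  unit_act : ∀ x, lact (G.unit (rX x)) x = x
  comp_act : ∀ γ ξ x, G.s γ = G.r ξ → G.s ξ = rX x →
    lact (G.comp γ ξ) x = lact γ (lact ξ x)

/-- A right action of the groupoid `H` on a set `X` with moment map `sX`;
`ract x η` is only meaningful when `sX x = H.r η`. -/
structure IsRightActionOf {ArrH ObjH X : Type} (H : GroupoidData ArrH ObjH)
    (sX : X → ObjH) (ract : X → ArrH → X) : Prop where
  moment : ∀ x η, sX x = H.r η → sX (ract x η) = H.s η
  unit_act : ∀ x, ract x (H.unit (sX x)) = x
  comp_act : ∀ x η ζ, sX x = H.r η → H.s η = H.r ζ →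
    ract x (H.comp η ζ) = ract (ract x η) ζ

/-- The algebraic part of `X` being a `(G,H)`-equivalence: commuting free
left `G`- and right `H`-actions, each moment map invariant under the other
action, whose fibres are exactly the orbits of the other action, and both
moment maps surjective. -/
structure IsEquivalenceData {ArrG ObjG ArrH ObjH X : Type}
    (G : GroupoidData ArrG ObjG) (H : GroupoidData ArrH ObjH)
    (rX : X → ObjG) (sX : X → ObjH)
    (lact : ArrG → X → X) (ract : X → ArrH → X) : Prop where
  left_action : IsLeftActionOf G rX lact
  right_action : IsRightActionOf H sX ract
  commute : ∀ γ x η, G.s γ = rX x → sX x = H.r η →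
    ract (lact γ x) η = lact γ (ract x η)
  rX_ract : ∀ x η, sX x = H.r η → rX (ract x η) = rX x
  sX_lact : ∀ γ x, G.s γ = rX x → sX (lact γ x) = sX x
  free_left : ∀ γ x, G.s γ = rX x → lact γ x = x → γ = G.unit (rX x)
  free_right : ∀ x η, sX x = H.r η → ract x η = x → η = H.unit (sX x)
  rX_fibres : ∀ x y, rX x = rX y ↔ ∃ η, sX x = H.r η ∧ ract x η = y
  sX_fibres : ∀ x y, sX x = sX y ↔ ∃ γ, G.s γ = rX x ∧ lact γ x = y
  rX_surj : Function.Surjective rX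
  sX_surj : Function.Surjective sX

/-- Continuity of the structure maps of a topological groupoid. -/
structure IsTopologicalGroupoid {Arr Obj : Type} [TopologicalSpace Arr]
    [TopologicalSpace Obj] (D : GroupoidData Arr Obj) : Prop where
  continuous_r : Continuous D.r
  continuous_s : Continuous D.s
  continuous_unit : Continuous D.unit
  continuous_inv : Continuous D.inv
  continuous_comp : Continuous fun p : {q : Arr × Arr // D.s q.1 = D.r q.2} =>
    D.comp p.val.1 p.val.2

/-- A Haar system for groupoid data `D`, relative to a set `Real` of
"genuine" arrows (take `Real = Set.univ` for an honest groupoid): a family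
of Radon measures `κ u`, `u` a unit, with support exactly the genuine arrows
with range `u`, left invariant, and continuous against compactly supported
continuous functions. -/
def IsHaarSystemOn {Arr Obj : Type} [TopologicalSpace Arr] [TopologicalSpace Obj]
    [MeasurableSpace Arr] (D : GroupoidData Arr Obj) (Real : Set Arr)
    (κ : Obj → MeasureTheory.Measure Arr) : Prop :=
  (∀ u, κ u ({a | D.r a = u} ∩ Real)ᶜ = 0) ∧
  (∀ u U, IsOpen U → (U ∩ ({a | D.r a = u} ∩ Real)).Nonempty → 0 < κ u U) ∧
  (∀ u K, IsCompact K → κ u K < ⊤) ∧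
  (∀ a ∈ Real, ∀ f : Arr → ℝ, Continuous f → HasCompactSupport f →
    ∫ b, f (D.comp a b) ∂(κ (D.s a)) = ∫ b, f b ∂(κ (D.r a))) ∧
  (∀ f : Arr → ℝ, Continuous f → HasCompactSupport f →
    Continuous fun u => ∫ b, f b ∂(κ u))

/-- The measure `ν = μ ∘ κ` on the arrows induced by a measure `μ` on the
units and a Haar system `κ`. -/
noncomputable def nuMeasure {Arr Obj : Type} [MeasurableSpace Arr] [MeasurableSpace Obj]
    (κ : Obj → MeasureTheory.Measure Arr) (μ : MeasureTheory.Measure Obj) :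
    MeasureTheory.Measure Arr :=
  μ.bind κ

/-- Quasi-invariance of a measure `μ` on the unit space: `ν = μ∘κ` is
equivalent to its image under the inversion map. -/
def IsQuasiInvariant {Arr Obj : Type} [MeasurableSpace Arr] [MeasurableSpace Obj]
    (κ : Obj → MeasureTheory.Measure Arr) (inv : Arr → Arr)
    (μ : MeasureTheory.Measure Obj) : Prop :=
  nuMeasure κ μ ≪ (nuMeasure κ μ).map inv ∧ (nuMeasure κ μ).map inv ≪ nuMeasure κ μ


section EquivalenceSetting

variable {ArrG ObjG ArrH ObjH X : Type}

/-- The topological conditions making `X` a `(G,H)`-equivalence of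
topological groupoids: both groupoids are topological, the algebraic
equivalence conditions hold, the moment maps are continuous open surjections,
and the two actions are continuous and proper. -/
structure IsTopEquivalence [TopologicalSpace ArrG] [TopologicalSpace ObjG]
    [TopologicalSpace ArrH] [TopologicalSpace ObjH] [TopologicalSpace X]
    (G : GroupoidData ArrG ObjG) (H : GroupoidData ArrH ObjH)
    (rX : X → ObjG) (sX : X → ObjH)
    (lact : ArrG → X → X) (ract : X → ArrH → X) : Prop where
  G_groupoid : G.IsGroupoid
  H_groupoid : H.IsGroupoid
  G_top : IsTopologicalGroupoid G
  H_top : IsTopologicalGroupoid H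
  equivalence : IsEquivalenceData G H rX sX lact ract
  continuous_rX : Continuous rX
  continuous_sX : Continuous sX
  open_rX : IsOpenMap rX
  open_sX : IsOpenMap sX
  continuous_lact : Continuous fun p : {q : ArrG × X // G.s q.1 = rX q.2} =>
    lact p.val.1 p.val.2
  continuous_ract : Continuous fun p : {q : X × ArrH // sX q.1 = H.r q.2} =>
    ract p.val.1 p.val.2
  proper_lact : IsProperMap fun p : {q : ArrG × X // G.s q.1 = rX q.2} =>
    (lact p.val.1 p.val.2, p.val.2)
  proper_ract : IsProperMap fun p : {q : X × ArrH // sX q.1 = H.r q.2} =>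
    (ract p.val.1 p.val.2, p.val.2)

/-- The iterated transformation groupoid `E = G ⋉ X ⋊ H` (realized on the
ambient product; the genuine arrows form the set `ECond`). -/
def EData (G : GroupoidData ArrG ObjG) (H : GroupoidData ArrH ObjH)
    (rX : X → ObjG) (sX : X → ObjH)
    (lact : ArrG → X → X) (ract : X → ArrH → X) :
    GroupoidData (ArrG × X × ArrH) X where
  r := fun a => a.2.1
  s := fun a => ract (lact (G.inv a.1) a.2.1) a.2.2
  unit := fun x => (G.unit (rX x), x, H.unit (sX x))
  comp := fun a b => (G.comp a.1 b.1, a.2.1, H.comp a.2.2 b.2.2)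
  inv := fun a => (G.inv a.1, ract (lact (G.inv a.1) a.2.1) a.2.2, H.inv a.2.2)

/-- The set of genuine arrows of `E = G ⋉ X ⋊ H`:
`{(γ,x,η) : r(γ) = r_X(x), s_X(x) = r(η)}`. -/
def ECond (G : GroupoidData ArrG ObjG) (H : GroupoidData ArrH ObjH)
    (rX : X → ObjG) (sX : X → ObjH) : Set (ArrG × X × ArrH) :=
  {a | G.r a.1 = rX a.2.1 ∧ sX a.2.1 = H.r a.2.2}

/-- The transformation groupoid `Ḡ = G ⋉ X` (realized on the ambient
product; genuine arrows form `GbarCond`). -/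
def GbarData (G : GroupoidData ArrG ObjG) (rX : X → ObjG)
    (lact : ArrG → X → X) : GroupoidData (ArrG × X) X where
  r := fun p => p.2
  s := fun p => lact (G.inv p.1) p.2
  unit := fun x => (G.unit (rX x), x)
  comp := fun p q => (G.comp p.1 q.1, p.2)
  inv := fun p => (G.inv p.1, lact (G.inv p.1) p.2)

/-- Genuine arrows of `Ḡ = G ⋉ X`. -/
def GbarCond (G : GroupoidData ArrG ObjG) (rX : X → ObjG) : Set (ArrG × X) :=
  {p | G.r p.1 = rX p.2}

/-- The transformation groupoid `H̄ = X ⋊ H` (realized on the ambient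
product; genuine arrows form `HbarCond`). -/
def HbarData (H : GroupoidData ArrH ObjH) (sX : X → ObjH)
    (ract : X → ArrH → X) : GroupoidData (X × ArrH) X where
  r := fun p => p.1
  s := fun p => ract p.1 p.2
  unit := fun x => (x, H.unit (sX x))
  comp := fun p q => (p.1, H.comp p.2 q.2)
  inv := fun p => (ract p.1 p.2, H.inv p.2)

/-- Genuine arrows of `H̄ = X ⋊ H`. -/
def HbarCond (H : GroupoidData ArrH ObjH) (sX : X → ObjH) : Set (X × ArrH) :=
  {p | sX p.1 = H.r p.2}

variable [MeasurableSpace ArrG] [MeasurableSpace ArrH] [MeasurableSpace X]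

/-- The canonical Haar system `λ_E^x = λ^{r_X(x)} × δ_x × σ^{s_X(x)}` on
`E = G ⋉ X ⋊ H`. -/
noncomputable def EHaar (lamG : ObjG → MeasureTheory.Measure ArrG)
    (sigH : ObjH → MeasureTheory.Measure ArrH) (rX : X → ObjG) (sX : X → ObjH) :
    X → MeasureTheory.Measure (ArrG × X × ArrH) := fun x =>
  (lamG (rX x)).prod ((MeasureTheory.Measure.dirac x).prod (sigH (sX x)))

/-- The Haar system `λ^{r_X(x)} × δ_x` on `Ḡ = G ⋉ X`. -/
noncomputable def GbarHaar (lamG : ObjG → MeasureTheory.Measure ArrG)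
    (rX : X → ObjG) : X → MeasureTheory.Measure (ArrG × X) := fun x =>
  (lamG (rX x)).prod (MeasureTheory.Measure.dirac x)

/-- The Haar system `δ_x × σ^{s_X(x)}` on `H̄ = X ⋊ H`. -/
noncomputable def HbarHaar (sigH : ObjH → MeasureTheory.Measure ArrH)
    (sX : X → ObjH) : X → MeasureTheory.Measure (X × ArrH) := fun x =>
  (MeasureTheory.Measure.dirac x).prod (sigH (sX x))

end EquivalenceSetting


section AuxiliaryLemmas

open MeasureTheory Filter Topology Set
open scoped ENNReal

lemma aux_kernel_meas_of_piSystem {ι Y : Type} [MeasurableSpace ι] [m : MeasurableSpace Y]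
    (κ : ι → Measure Y) (C : Set (Set Y)) (hC : IsPiSystem C)
    (hgen : m = MeasurableSpace.generateFrom C)
    (W : ℕ → Set Y) (hWm : ∀ n, MeasurableSet (W n)) (hWmono : Monotone W)
    (hWuniv : (⋃ n, W n) = Set.univ)
    (hWfin : ∀ i n, κ i (W n) < ⊤)
    (hWmeas : ∀ n, Measurable fun i => κ i (W n))
    (hCW : ∀ c ∈ C, ∀ n, Measurable fun i => κ i (c ∩ W n)) :
    ∀ A, MeasurableSet A → Measurable fun i => κ i A := by
  have key : ∀ n, ∀ A, MeasurableSet A → Measurable fun i => κ i (A ∩ W n) := by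
    intro n
    have := MeasurableSpace.induction_on_inter (C := fun A _ => Measurable fun i => κ i (A ∩ W n))
      hgen hC ?_ ?_ ?_ ?_
    · exact fun A hA => this A hA
    · simp
    · exact fun t ht => hCW t ht n
    · intro t htm hm
      have heq : ∀ i, κ i (tᶜ ∩ W n) = κ i (W n) - κ i (t ∩ W n) := by
        intro i
        have h1 : tᶜ ∩ W n = W n \ (t ∩ W n) := by
          ext y; by_cases hy : y ∈ t <;> simp [hy]
        rw [h1, measure_diff inter_subset_right ((htm.inter (hWm n)).nullMeasurableSet)
          (((measure_mono inter_subset_right).trans_lt (hWfin i n)).ne)]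
      simp only [heq]
      exact (hWmeas n).sub hm
    · intro f hdis hfm hmeas
      have heq : ∀ i, κ i ((⋃ j, f j) ∩ W n) = ∑' j, κ i (f j ∩ W n) := by
        intro i
        rw [iUnion_inter]
        exact measure_iUnion (fun a b hab => Disjoint.mono inter_subset_left
          inter_subset_left (hdis hab)) (fun j => (hfm j).inter (hWm n))
      simp only [heq]
      exact Measurable.ennreal_tsum hmeas
  intro A hA
  have heq : ∀ i, κ i A = ⨆ n, κ i (A ∩ W n) := by
    intro i
    have h2 : κ i A = κ i (⋃ n, A ∩ W n) := by rw [← inter_iUnion, hWuniv, inter_univ]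
    rw [h2, Directed.measure_iUnion (fun a b => ⟨max a b,
      inter_subset_inter_right _ (hWmono (le_max_left a b)),
      inter_subset_inter_right _ (hWmono (le_max_right a b))⟩)]
  simp only [heq]
  exact Measurable.iSup fun n => key n A hA

/-- An exhaustion of a σ-compact locally compact space by open sets with compact closures. -/
lemma aux_exists_open_exhaustion (Y : Type) [TopologicalSpace Y] [T2Space Y]
    [LocallyCompactSpace Y] [SecondCountableTopology Y] :
    ∃ W : ℕ → Set Y, (∀ n, IsOpen (W n)) ∧ Monotone W ∧ (⋃ n, W n) = Set.univ ∧
      ∀ n, IsCompact (closure (W n)) := by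
  obtain K := CompactExhaustion.choice Y
  refine ⟨fun n => interior (K (n + 1)), fun n => isOpen_interior, ?_, ?_, ?_⟩
  · exact monotone_nat_of_le_succ fun n =>
      (interior_subset.trans (K.subset_interior_succ (n + 1)))
  · apply eq_univ_of_univ_subset
    intro y _
    rcases K.exists_mem y with ⟨n, hn⟩
    exact mem_iUnion.2 ⟨n, K.subset_interior_succ n hn⟩
  · intro n
    exact (K.isCompact (n + 1)).of_isClosed_subset isClosed_closure
      ((closure_minimal interior_subset (K.isCompact (n+1)).isClosed))

lemma aux_kernel_meas_open {ι Y : Type} [TopologicalSpace ι] [MeasurableSpace ι]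
    [OpensMeasurableSpace ι]
    [TopologicalSpace Y] [MeasurableSpace Y] [BorelSpace Y] [T2Space Y]
    [LocallyCompactSpace Y] [SecondCountableTopology Y]
    (κ : ι → Measure Y)
    (hfin : ∀ i K, IsCompact K → κ i K < ⊤)
    (hcont : ∀ f : Y → ℝ, Continuous f → HasCompactSupport f →
      Continuous fun i => ∫ y, f y ∂κ i) :
    ∀ U : Set Y, IsOpen U → Measurable fun i => κ i U := by
  intro U hU
  -- exhaust U by compacts
  haveI : LocallyCompactSpace ↥U := hU.locallyCompactSpace
  haveI : SigmaCompactSpace ↥U := by infer_instance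
  set K : ℕ → Set Y := fun n => Subtype.val '' compactCovering ↥U n with hK
  have hKcomp : ∀ n, IsCompact (K n) :=
    fun n => (isCompact_compactCovering ↥U n).image continuous_subtype_val
  have hKsub : ∀ n, K n ⊆ U := by
    rintro n _ ⟨y, _, rfl⟩; exact y.2
  have hKmono : Monotone K :=
    fun a b hab => image_mono (compactCovering_subset ↥U hab)
  have hKunion : (⋃ n, K n) = U := by
    rw [← image_iUnion, iUnion_compactCovering, image_univ, Subtype.range_val]
  -- Urysohn functions
  have hf : ∀ n, ∃ f : C(Y, ℝ), EqOn f 1 (K n) ∧ EqOn f 0 Uᶜ ∧ HasCompactSupport f ∧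
      ∀ x, f x ∈ Icc (0 : ℝ) 1 := by
    intro n
    exact exists_continuous_one_zero_of_isCompact (hKcomp n) hU.isClosed_compl
      (disjoint_compl_right_iff_subset.mpr (hKsub n))
  choose f hf1 hf0 hfc hf01 using hf
  have hmainf : ∀ i, κ i U = ⨆ n, ENNReal.ofReal (∫ y, f n y ∂κ i) := by
    intro i
    haveI : IsFiniteMeasureOnCompacts (κ i) := ⟨fun {K'} hKc => hfin i K' hKc⟩
    have hint : ∀ n, Integrable (f n) (κ i) :=
      fun n => (f n).continuous.integrable_of_hasCompactSupport (hfc n)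
    have hreal : ∀ n, ENNReal.ofReal (∫ y, f n y ∂κ i) = ∫⁻ y, ENNReal.ofReal (f n y) ∂κ i :=
      fun n => ofReal_integral_eq_lintegral_ofReal (hint n)
        (Eventually.of_forall fun y => (hf01 n y).1)
    have hupper : ∀ n, ∫⁻ y, ENNReal.ofReal (f n y) ∂κ i ≤ κ i U := by
      intro n
      calc ∫⁻ y, ENNReal.ofReal (f n y) ∂κ i
          ≤ ∫⁻ y, U.indicator (1 : Y → ℝ≥0∞) y ∂κ i := by
            apply lintegral_mono
            intro y
            by_cases hy : y ∈ U
            · simpa [hy] using ENNReal.ofReal_le_one.mpr (hf01 n y).2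
            · simp [hy, hf0 n hy]
        _ = κ i U := by rw [lintegral_indicator_one hU.measurableSet]
    have hlower : ∀ n, κ i (K n) ≤ ∫⁻ y, ENNReal.ofReal (f n y) ∂κ i := by
      intro n
      calc κ i (K n) = ∫⁻ y, (K n).indicator (1 : Y → ℝ≥0∞) y ∂κ i := by
            rw [lintegral_indicator_one (hKcomp n).measurableSet]
        _ ≤ ∫⁻ y, ENNReal.ofReal (f n y) ∂κ i := by
            apply lintegral_mono
            intro y
            by_cases hy : y ∈ K n
            · simp [hy, hf1 n hy]
            · simp [hy]
    apply le_antisymm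
    · have : κ i U = ⨆ n, κ i (K n) := by
        rw [← hKunion]
        exact Directed.measure_iUnion (hKmono.directed_le)
      rw [this]
      exact iSup_mono fun n => (hlower n).trans (le_of_eq (hreal n).symm)
    · exact iSup_le fun n => le_of_eq_of_le (hreal n) (hupper n)
  simp only [hmainf]
  exact Measurable.iSup fun n =>
    (ENNReal.measurable_ofReal).comp (hcont (f n) (f n).continuous (hfc n)).measurable

lemma aux_kernel_meas_borel {ι Y : Type} [TopologicalSpace ι] [MeasurableSpace ι]
    [OpensMeasurableSpace ι]
    [TopologicalSpace Y] [MeasurableSpace Y] [BorelSpace Y] [T2Space Y]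
    [LocallyCompactSpace Y] [SecondCountableTopology Y]
    (κ : ι → Measure Y)
    (hfin : ∀ i K, IsCompact K → κ i K < ⊤)
    (hcont : ∀ f : Y → ℝ, Continuous f → HasCompactSupport f →
      Continuous fun i => ∫ y, f y ∂κ i) :
    ∀ A, MeasurableSet A → Measurable fun i => κ i A := by
  have hopen := aux_kernel_meas_open κ hfin hcont
  obtain ⟨W, hWopen, hWmono, hWuniv, hWcl⟩ := aux_exists_open_exhaustion Y
  refine aux_kernel_meas_of_piSystem κ {s | IsOpen s}
    (fun s hs t ht _ => hs.inter ht) ?_ W (fun n => (hWopen n).measurableSet) hWmono hWuniv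
    (fun i n => (measure_mono subset_closure).trans_lt (hfin i _ (hWcl n)))
    (fun n => hopen _ (hWopen n))
    (fun c hc n => hopen _ (hc.inter (hWopen n)))
  exact BorelSpace.measurable_eq.trans rfl

end AuxiliaryLemmas


/-- If `μ` is a Radon measure on `X` which is quasi-invariant
with respect to `E = G ⋉ X ⋊ H`, then the push-forward `τ = (s_X)_*μ` is
quasi-invariant with respect to `H`. -/
theorem statement7
    {ArrG ObjG ArrH ObjH X : Type}
    [TopologicalSpace ArrG] [TopologicalSpace ObjG] [TopologicalSpace ArrH]
    [TopologicalSpace ObjH] [TopologicalSpace X]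
    [T2Space ArrG] [T2Space ObjG] [T2Space ArrH] [T2Space ObjH] [T2Space X]
    [SecondCountableTopology ArrG] [SecondCountableTopology ObjG]
    [SecondCountableTopology ArrH] [SecondCountableTopology ObjH]
    [SecondCountableTopology X]
    [LocallyCompactSpace ArrG] [LocallyCompactSpace ObjG] [LocallyCompactSpace ArrH]
    [LocallyCompactSpace ObjH] [LocallyCompactSpace X]
    [MeasurableSpace ArrG] [BorelSpace ArrG] [MeasurableSpace ArrH] [BorelSpace ArrH]
    [MeasurableSpace X] [BorelSpace X] [MeasurableSpace ObjH] [BorelSpace ObjH]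
    (G : GroupoidData ArrG ObjG) (H : GroupoidData ArrH ObjH)
    (rX : X → ObjG) (sX : X → ObjH) (lact : ArrG → X → X) (ract : X → ArrH → X)
    (heq : IsTopEquivalence G H rX sX lact ract)
    (lamG : ObjG → MeasureTheory.Measure ArrG)
    (hlamG : IsHaarSystemOn G Set.univ lamG)
    (sigH : ObjH → MeasureTheory.Measure ArrH)
    (hsigH : IsHaarSystemOn H Set.univ sigH)
    (μ : MeasureTheory.Measure X) [μ.Regular]
    (hqi : IsQuasiInvariant (EHaar lamG sigH rX sX)
      (EData G H rX sX lact ract).inv μ)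
    : IsQuasiInvariant sigH H.inv (μ.map sX) := by
  classical
  rcases isEmpty_or_nonempty X with hX | hX
  · -- In the degenerate case `X = ∅`, both measures in question vanish.
    have hμ0 : μ = 0 := Measure.eq_zero_of_isEmpty μ
    have hτ0 : μ.map sX = 0 := by rw [hμ0, Measure.map_zero]
    have hν0 : nuMeasure sigH (μ.map sX) = 0 := by
      rw [hτ0, nuMeasure, Measure.bind_zero_left]
    constructor
    · rw [hν0, Measure.map_zero]
    · rw [hν0, Measure.map_zero]
  obtain ⟨x₀⟩ := hX
  -- basic measurability facts
  have hsXm : Measurable sX := heq.continuous_sX.measurable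
  have hinvm : Measurable H.inv := heq.H_top.continuous_inv.measurable
  have hfinσ : ∀ (v : ObjH) (K : Set ArrH), IsCompact K → sigH v K < ⊤ :=
    fun v K hK => hsigH.2.2.1 v K hK
  have hfinL : ∀ (u : ObjG) (K : Set ArrG), IsCompact K → lamG u K < ⊤ :=
    fun u K hK => hlamG.2.2.1 u K hK
  have hmσ : ∀ A, MeasurableSet A → Measurable fun v => sigH v A :=
    aux_kernel_meas_borel sigH hfinσ (fun f hf hfc => hsigH.2.2.2.2 f hf hfc)
  have hmLX : ∀ A, MeasurableSet A → Measurable fun x : X => lamG (rX x) A :=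
    aux_kernel_meas_borel (fun x => lamG (rX x)) (fun x K hK => hfinL _ K hK)
      (fun f hf hfc => (hlamG.2.2.2.2 f hf hfc).comp heq.continuous_rX)
  have hsfσ : ∀ v, SFinite (sigH v) := by
    intro v
    haveI : IsFiniteMeasureOnCompacts (sigH v) := ⟨fun {K} hK => hfinσ v K hK⟩
    infer_instance
  set κE := EHaar lamG sigH rX sX with hκE
  -- the rectangle formula for `κE`
  have hrect : ∀ (x : X) (s : Set ArrG) (t : Set X) (u : Set ArrH),
      κE x (s ×ˢ t ×ˢ u) = lamG (rX x) s * (Measure.dirac x t * sigH (sX x) u) := by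
    intro x s t u
    haveI := hsfσ (sX x)
    rw [show κE x = (lamG (rX x)).prod ((Measure.dirac x).prod (sigH (sX x))) from rfl,
        Measure.prod_prod, Measure.prod_prod]
  -- measurability of the map `x ↦ κE x B` for every Borel `B`
  have hrm : ∀ (s : Set ArrG) (t : Set X) (u : Set ArrH), MeasurableSet s → MeasurableSet t →
      MeasurableSet u → Measurable fun x => κE x (s ×ˢ t ×ˢ u) := by
    intro s t u hs ht hu
    have hx : ∀ x, κE x (s ×ˢ t ×ˢ u) =
        lamG (rX x) s * (t.indicator 1 x * sigH (sX x) u) := by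
      intro x; rw [hrect x s t u, Measure.dirac_apply' x ht]
    simp only [hx]
    exact (hmLX s hs).mul ((measurable_one.indicator ht).mul ((hmσ u hu).comp hsXm))
  have hmE : ∀ B : Set (ArrG × X × ArrH), MeasurableSet B → Measurable fun x => κE x B := by
    obtain ⟨W1, hW1o, hW1m, hW1u, hW1c⟩ := aux_exists_open_exhaustion ArrG
    obtain ⟨W2, hW2o, hW2m, hW2u, hW2c⟩ := aux_exists_open_exhaustion X
    obtain ⟨W3, hW3o, hW3m, hW3u, hW3c⟩ := aux_exists_open_exhaustion ArrH
    have hgen : (Prod.instMeasurableSpace : MeasurableSpace (ArrG × X × ArrH)) =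
        MeasurableSpace.generateFrom
          (Set.image2 (· ×ˢ ·) {s : Set ArrG | MeasurableSet s}
            (Set.image2 (· ×ˢ ·) {t : Set X | MeasurableSet t}
              {u : Set ArrH | MeasurableSet u})) := by
      refine (generateFrom_eq_prod MeasurableSpace.generateFrom_measurableSet
        generateFrom_prod ?_ ?_).symm
      · exact isCountablySpanning_measurableSet
      · exact IsCountablySpanning.prod isCountablySpanning_measurableSet isCountablySpanning_measurableSet
    refine aux_kernel_meas_of_piSystem κE _
      (IsPiSystem.prod MeasurableSpace.isPiSystem_measurableSet (IsPiSystem.prod MeasurableSpace.isPiSystem_measurableSet MeasurableSpace.isPiSystem_measurableSet))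
      hgen (fun n => W1 n ×ˢ W2 n ×ˢ W3 n) ?_ ?_ ?_ ?_ ?_ ?_
    · exact fun n => ((hW1o n).measurableSet.prod
        ((hW2o n).measurableSet.prod (hW3o n).measurableSet))
    · exact fun a b hab => Set.prod_mono (hW1m hab)
        (Set.prod_mono (hW2m hab) (hW3m hab))
    · apply Set.eq_univ_of_forall
      intro a
      have h1 : a.1 ∈ ⋃ n, W1 n := hW1u ▸ Set.mem_univ _
      have h2 : a.2.1 ∈ ⋃ n, W2 n := hW2u ▸ Set.mem_univ _
      have h3 : a.2.2 ∈ ⋃ n, W3 n := hW3u ▸ Set.mem_univ _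
      obtain ⟨n1, hn1⟩ := Set.mem_iUnion.mp h1
      obtain ⟨n2, hn2⟩ := Set.mem_iUnion.mp h2
      obtain ⟨n3, hn3⟩ := Set.mem_iUnion.mp h3
      refine Set.mem_iUnion.mpr ⟨max n1 (max n2 n3), ?_, ?_, ?_⟩
      · exact hW1m (le_max_left _ _) hn1
      · exact hW2m ((le_max_left _ _).trans (le_max_right _ _)) hn2
      · exact hW3m ((le_max_right _ _).trans (le_max_right _ _)) hn3
    · intro x n
      rw [hrect]
      have h1 : lamG (rX x) (W1 n) < ⊤ :=
        (measure_mono subset_closure).trans_lt (hfinL _ _ (hW1c n))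
      have h3 : sigH (sX x) (W3 n) < ⊤ :=
        (measure_mono subset_closure).trans_lt (hfinσ _ _ (hW3c n))
      have h2 : Measure.dirac x (W2 n) * sigH (sX x) (W3 n) ≤ sigH (sX x) (W3 n) := by
        calc Measure.dirac x (W2 n) * sigH (sX x) (W3 n)
            ≤ 1 * sigH (sX x) (W3 n) := mul_le_mul_left prob_le_one _
          _ = sigH (sX x) (W3 n) := one_mul _
      exact ENNReal.mul_lt_top h1 (h2.trans_lt h3)
    · intro n
      exact hrm _ _ _ (hW1o n).measurableSet (hW2o n).measurableSet (hW3o n).measurableSet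
    · rintro c ⟨s, hs, -, ⟨t, ht, u, hu, rfl⟩, rfl⟩ n
      have : s ×ˢ t ×ˢ u ∩ W1 n ×ˢ W2 n ×ˢ W3 n =
          (s ∩ W1 n) ×ˢ ((t ∩ W2 n) ×ˢ (u ∩ W3 n)) := by
        rw [Set.prod_inter_prod, Set.prod_inter_prod]
      rw [this]
      exact hrm _ _ _ (hs.inter (hW1o n).measurableSet) (ht.inter (hW2o n).measurableSet)
        (hu.inter (hW3o n).measurableSet)
  have hmEm : Measurable κE := Measure.measurable_of_measurable_coe _ hmE
  have hmσm : Measurable sigH := Measure.measurable_of_measurable_coe _ hmσ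
  set νE := nuMeasure κE μ with hνEdef
  have hνE : ∀ B : Set (ArrG × X × ArrH), MeasurableSet B → νE B = ∫⁻ x, κE x B ∂μ :=
    fun B hB => Measure.bind_apply hB hmEm.aemeasurable
  have hνH : ∀ A : Set ArrH, MeasurableSet A →
      nuMeasure sigH (μ.map sX) A = ∫⁻ x, sigH (sX x) A ∂μ := by
    intro A hA
    rw [nuMeasure, Measure.bind_apply hA hmσm.aemeasurable, lintegral_map (hmσ A hA) hsXm]
  -- positivity of the λ-fibres
  have hpos : ∀ u : ObjG, lamG u Set.univ ≠ 0 := by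
    intro u
    have := hlamG.2.1 u Set.univ isOpen_univ
      ⟨G.unit u, by simp [heq.G_groupoid.r_unit u]⟩
    exact this.ne'
  -- evaluation of `κE` and `νE` on the relevant cylinders
  have hκEB : ∀ (x : X) (A : Set ArrH),
      κE x (Set.univ ×ˢ Set.univ ×ˢ A) = lamG (rX x) Set.univ * sigH (sX x) A := by
    intro x A
    rw [hrect x _ _ _]
    simp
  have hEB : ∀ A : Set ArrH, MeasurableSet A →
      (νE (Set.univ ×ˢ Set.univ ×ˢ A) = 0 ↔ nuMeasure sigH (μ.map sX) A = 0) := by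
    intro A hA
    have hBm : MeasurableSet (Set.univ ×ˢ Set.univ ×ˢ A : Set (ArrG × X × ArrH)) :=
      MeasurableSet.univ.prod (MeasurableSet.univ.prod hA)
    rw [hνE _ hBm, hνH A hA]
    have hmf : Measurable fun x => sigH (sX x) A := (hmσ A hA).comp hsXm
    have hmg : Measurable fun x => lamG (rX x) Set.univ * sigH (sX x) A :=
      (hmLX _ MeasurableSet.univ).mul hmf
    simp only [hκEB]
    rw [lintegral_eq_zero_iff hmg, lintegral_eq_zero_iff hmf]
    refine eventually_congr (Eventually.of_forall fun x => ?_)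
    simp only [Pi.zero_apply]
    constructor
    · intro h
      rcases mul_eq_zero.mp h with h | h
      · exact absurd h (hpos _)
      · exact h
    · intro h; rw [h, mul_zero]
  -- the genuine arrows of `E` form a conull closed set
  have hECm : MeasurableSet (ECond G H rX sX) := by
    have h1 : IsClosed {a : ArrG × X × ArrH | G.r a.1 = rX a.2.1} :=
      isClosed_eq (heq.G_top.continuous_r.comp continuous_fst)
        (heq.continuous_rX.comp (continuous_fst.comp continuous_snd))
    have h2 : IsClosed {a : ArrG × X × ArrH | sX a.2.1 = H.r a.2.2} :=
      isClosed_eq (heq.continuous_sX.comp (continuous_fst.comp continuous_snd))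
        (heq.H_top.continuous_r.comp (continuous_snd.comp continuous_snd))
    have : ECond G H rX sX = {a : ArrG × X × ArrH | G.r a.1 = rX a.2.1} ∩
        {a : ArrG × X × ArrH | sX a.2.1 = H.r a.2.2} := rfl
    rw [this]
    exact (h1.inter h2).measurableSet
  have hsuppE : ∀ x, κE x (ECond G H rX sX)ᶜ = 0 := by
    intro x
    have hLnull : lamG (rX x) {γ : ArrG | G.r γ = rX x}ᶜ = 0 := by
      have := hlamG.1 (rX x)
      simpa using this
    have hSnull : sigH (sX x) {η : ArrH | H.r η = sX x}ᶜ = 0 := by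
      have := hsigH.1 (sX x)
      simpa using this
    have hsub : (ECond G H rX sX)ᶜ ⊆
        ({γ : ArrG | G.r γ = rX x}ᶜ ×ˢ (Set.univ : Set X) ×ˢ (Set.univ : Set ArrH)) ∪
        ((Set.univ : Set ArrG) ×ˢ ({x}ᶜ : Set X) ×ˢ (Set.univ : Set ArrH)) ∪
        ((Set.univ : Set ArrG) ×ˢ (Set.univ : Set X) ×ˢ {η : ArrH | H.r η = sX x}ᶜ) := by
      intro a ha
      by_contra hcon
      simp only [Set.mem_union, Set.mem_prod, Set.mem_compl_iff, Set.mem_univ, and_true,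
        true_and, Set.mem_singleton_iff, Set.mem_setOf_eq, not_or, not_not] at hcon
      obtain ⟨⟨h1, h2⟩, h3⟩ := hcon
      refine ha ⟨?_, ?_⟩
      · rw [h2]; exact h1
      · rw [h2]; exact h3.symm
    have e1 : κE x ({γ : ArrG | G.r γ = rX x}ᶜ ×ˢ (Set.univ : Set X) ×ˢ
        (Set.univ : Set ArrH)) = 0 := by
      rw [hrect]; rw [hLnull, zero_mul]
    have e2 : κE x ((Set.univ : Set ArrG) ×ˢ ({x}ᶜ : Set X) ×ˢ
        (Set.univ : Set ArrH)) = 0 := by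
      rw [hrect]
      have : Measure.dirac x ({x}ᶜ : Set X) = 0 := by
        rw [Measure.dirac_apply' x (MeasurableSet.singleton x).compl]
        simp
      rw [this, zero_mul, mul_zero]
    have e3 : κE x ((Set.univ : Set ArrG) ×ˢ (Set.univ : Set X) ×ˢ
        {η : ArrH | H.r η = sX x}ᶜ) = 0 := by
      rw [hrect, hSnull, mul_zero, mul_zero]
    have hle : κE x (ECond G H rX sX)ᶜ ≤ 0 := by
      refine le_trans (measure_mono hsub) ?_
      refine le_trans (measure_union_le _ _) ?_
      rw [e3]
      refine le_trans (add_le_add_left (measure_union_le _ _) 0) ?_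
      rw [e1, e2]
      simp
    exact le_antisymm hle zero_le
  have hνEc : νE (ECond G H rX sX)ᶜ = 0 := by
    rw [hνE _ hECm.compl]
    simp [hsuppE]
  -- a measurable total version of the inversion of `E`
  set Einv := (EData G H rX sX lact ract).inv with hEinvdef
  set d : ArrG × X × ArrH := (G.unit (rX x₀), x₀, H.unit (sX x₀)) with hd
  set g : ArrG × X × ArrH → ArrG × X × ArrH :=
    fun a => if h : a ∈ ECond G H rX sX then Einv a else d with hg
  have hgmeas : Measurable g := by
    have hcont : Continuous fun p : ↥(ECond G H rX sX) => Einv (p : ArrG × X × ArrH) := by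
      have hc1 : Continuous fun p : ↥(ECond G H rX sX) => G.inv (p : ArrG × X × ArrH).1 :=
        heq.G_top.continuous_inv.comp (continuous_fst.comp continuous_subtype_val)
      have hF1 : Continuous fun p : ↥(ECond G H rX sX) =>
          (⟨(G.inv (p : ArrG × X × ArrH).1, (p : ArrG × X × ArrH).2.1), by
            rw [heq.G_groupoid.s_inv]; exact p.2.1⟩ :
            {q : ArrG × X // G.s q.1 = rX q.2}) :=
        Continuous.subtype_mk (hc1.prodMk
          ((continuous_fst.comp continuous_snd).comp continuous_subtype_val)) _
      have hy : Continuous fun p : ↥(ECond G H rX sX) =>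
          lact (G.inv (p : ArrG × X × ArrH).1) (p : ArrG × X × ArrH).2.1 :=
        heq.continuous_lact.comp hF1
      have hF2 : Continuous fun p : ↥(ECond G H rX sX) =>
          (⟨(lact (G.inv (p : ArrG × X × ArrH).1) (p : ArrG × X × ArrH).2.1,
            (p : ArrG × X × ArrH).2.2), by
            rw [heq.equivalence.sX_lact _ _ (by rw [heq.G_groupoid.s_inv]; exact p.2.1)]
            exact p.2.2⟩ : {q : X × ArrH // sX q.1 = H.r q.2}) :=
        Continuous.subtype_mk (hy.prodMk
          ((continuous_snd.comp continuous_snd).comp continuous_subtype_val)) _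
      have hc2 : Continuous fun p : ↥(ECond G H rX sX) =>
          ract (lact (G.inv (p : ArrG × X × ArrH).1) (p : ArrG × X × ArrH).2.1)
            (p : ArrG × X × ArrH).2.2 :=
        heq.continuous_ract.comp hF2
      have hc3 : Continuous fun p : ↥(ECond G H rX sX) =>
          H.inv (p : ArrG × X × ArrH).2.2 :=
        heq.H_top.continuous_inv.comp ((continuous_snd.comp continuous_snd).comp
          continuous_subtype_val)
      exact hc1.prodMk (hc2.prodMk hc3)
    exact Measurable.dite hcont.measurable measurable_const hECm
  have hgE : g =ᵐ[νE] Einv := by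
    rw [Filter.EventuallyEq, ae_iff]
    refine measure_mono_null ?_ hνEc
    intro a ha
    simp only [Set.mem_setOf_eq] at ha
    intro hmem
    exact ha (by rw [hg]; simp only [dif_pos hmem])
  have hpre : ∀ A : Set ArrH,
      Einv ⁻¹' (Set.univ ×ˢ Set.univ ×ˢ A) =
        Set.univ ×ˢ Set.univ ×ˢ (H.inv ⁻¹' A) := by
    intro A
    ext a
    simp [hEinvdef, EData, Set.mem_prod]
  have hmap : ∀ A : Set ArrH, MeasurableSet A →
      (νE.map Einv) (Set.univ ×ˢ Set.univ ×ˢ A) =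
        νE (Set.univ ×ˢ Set.univ ×ˢ (H.inv ⁻¹' A)) := by
    intro A hA
    have hBm : MeasurableSet (Set.univ ×ˢ Set.univ ×ˢ A : Set (ArrG × X × ArrH)) :=
      MeasurableSet.univ.prod (MeasurableSet.univ.prod hA)
    rw [Measure.map_congr hgE.symm, Measure.map_apply hgmeas hBm]
    have hagree : ∀ a ∈ ECond G H rX sX,
        (a ∈ g ⁻¹' (Set.univ ×ˢ Set.univ ×ˢ A) ↔
          a ∈ (Set.univ ×ˢ Set.univ ×ˢ (H.inv ⁻¹' A) : Set (ArrG × X × ArrH))) := by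
      intro a hmem
      have : g a = Einv a := by rw [hg]; simp only [dif_pos hmem]
      rw [Set.mem_preimage, this, ← Set.mem_preimage, hpre A]
    refine measure_congr (MeasureTheory.ae_eq_set.mpr
      ⟨measure_mono_null ?_ hνEc, measure_mono_null ?_ hνEc⟩)
    · rintro a ⟨h1, h2⟩
      intro hmem
      exact h2 ((hagree a hmem).1 h1)
    · rintro a ⟨h1, h2⟩
      intro hmem
      exact h2 ((hagree a hmem).2 h1)
  -- conclusion
  constructor
  · refine Measure.AbsolutelyContinuous.mk ?_
    intro A hA h0
    rw [Measure.map_apply hinvm hA] at h0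
    have h1 : νE (Set.univ ×ˢ Set.univ ×ˢ (H.inv ⁻¹' A)) = 0 :=
      (hEB _ (hinvm hA)).mpr h0
    have h2 : (νE.map Einv) (Set.univ ×ˢ Set.univ ×ˢ A) = 0 := by
      rw [hmap A hA]; exact h1
    have h3 : νE (Set.univ ×ˢ Set.univ ×ˢ A) = 0 := hqi.1 h2
    exact (hEB A hA).mp h3
  · refine Measure.AbsolutelyContinuous.mk ?_
    intro A hA h0
    rw [Measure.map_apply hinvm hA]
    have h1 : νE (Set.univ ×ˢ Set.univ ×ˢ A) = 0 := (hEB A hA).mpr h0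
    have h2 : (νE.map Einv) (Set.univ ×ˢ Set.univ ×ˢ A) = 0 := hqi.2 h1
    have h3 : νE (Set.univ ×ˢ Set.univ ×ˢ (H.inv ⁻¹' A)) = 0 := by
      rw [← hmap A hA]; exact h2
    exact (hEB _ (hinvm hA)).mp h3
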